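/- Suppose 2 is invertible in R. Let M be an R-module, [−,−] a skew-symmetric 2-bracket in M, and s a fully symmetric 3-bracket in M. Define the 3-bracket T by T(x,y,z) = (1/2)·(s(x,y,z) + [[x,y],z] + [[y,z],x] + [[z,x],y]). Then T is cyclically symmetric and the pair ([−,−], T) is a quasi-Lie pair, i.e., [[x,y],z] + [[y,z],x] + [[z,x],y] = T(x,y,z) − T(y,x,z) for all x, y, z ∈ M. -/
import Mathlib


/-- If `2` is invertible in `R`, a skew-symmetric 2-bracket `[-,-]` and a fully
symmetric 3-bracket `s` on a module `M` give rise to a quasi-Lie pair with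
3-bracket `T(x,y,z) = (1/2)(s(x,y,z) + [[x,y],z] + [[y,z],x] + [[z,x],y])`:
`T` is cyclically symmetric and the quasi-Jacobi identity
`[[x,y],z] + [[y,z],x] + [[z,x],y] = T(x,y,z) - T(y,x,z)` holds. -/
theorem quasiLie_from_symmetric_bracket {R : Type*} [CommRing R] [Invertible (2 : R)]
    {M : Type*} [AddCommGroup M] [Module R M]
    (b2 : M →ₗ[R] M →ₗ[R] M) (s : M →ₗ[R] M →ₗ[R] M →ₗ[R] M)
    (hskew : ∀ x y : M, b2 x y = - b2 y x)
    (hsym12 : ∀ x y z : M, s x y z = s y x z)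
    (hsym23 : ∀ x y z : M, s x y z = s x z y)
    (T : M → M → M → M)
    (hT : ∀ x y z : M, T x y z =
      (⅟(2 : R)) • (s x y z + b2 (b2 x y) z + b2 (b2 y z) x + b2 (b2 z x) y)) :
    (∀ x y z : M, T x y z = T z x y) ∧
    (∀ x y z : M,
      b2 (b2 x y) z + b2 (b2 y z) x + b2 (b2 z x) y = T x y z - T y x z) := by
  constructor
  · intro x y z
    rw [hT x y z, hT z x y, show s z x y = s x y z by rw [hsym12, hsym23]]
    congr 1
    abel
  · intro x y z
    rw [hT x y z, hT y x z, hsym12 y x z, hskew y x, hskew x z, hskew z y]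
    simp only [map_neg, LinearMap.neg_apply]
    rw [← smul_sub]
    have h : s x y z + b2 (b2 x y) z + b2 (b2 y z) x + b2 (b2 z x) y -
        (s x y z + -b2 (b2 x y) z + -b2 (b2 z x) y + -b2 (b2 y z) x) =
        (b2 (b2 x y) z + b2 (b2 y z) x + b2 (b2 z x) y) +
        (b2 (b2 x y) z + b2 (b2 y z) x + b2 (b2 z x) y) := by abel
    rw [h, smul_add, invOf_two_smul_add_invOf_two_smul]
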